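/- arXiv:1911.08700 — 3 statements merged into one kernel-verified Lean document; each statement's English description precedes it below -/
import Mathlib

section
/- Let U be a D×D real symmetric positive semidefinite matrix of rank r, partitioned into blocks U_{ij} of size d_i×d_j where D = d_1+...+d_m. Suppose each diagonal block satisfies U_{ii} ⪯ I and tr(U_{ii}) = r. Then there exists a matrix O ∈ ℝ^{D×r}, partitioned into blocks O_i ∈ ℝ^{d_i×r}, such that U = O Oᵀ and O_iᵀ O_i = I for all i. -/
open Matrix

/-- Rank factorization of a real PSD matrix: a PSD matrix of rank `r` can be written
as `B * Bᵀ` with `B` having `r` columns. -/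
lemma rankFact {n : Type*} [Fintype n] [DecidableEq n] (r : ℕ) (U : Matrix n n ℝ)
    (hU : U.PosSemidef) (hrank : U.rank = r) : ∃ B : Matrix n (Fin r) ℝ, U = B * Bᵀ := by
  have hH := hU.isHermitian
  have hcard : Fintype.card {i // hH.eigenvalues i ≠ 0} = r := by
    rw [← hH.rank_eq_card_non_zero_eigs, hrank]
  let e := Fintype.equivFinOfCardEq hcard
  set V : Matrix n n ℝ := (hH.eigenvectorUnitary : Matrix n n ℝ) with hV
  refine ⟨Matrix.of fun x c => V x (e.symm c) * Real.sqrt (hH.eigenvalues (e.symm c)), ?_⟩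
  ext x y
  rw [Matrix.mul_apply]
  simp only [Matrix.transpose_apply, Matrix.of_apply]
  symm
  have key : ∀ j : n, V x j * Real.sqrt (hH.eigenvalues j) *
      (V y j * Real.sqrt (hH.eigenvalues j)) = V x j * hH.eigenvalues j * V y j := by
    intro j
    have h := Real.mul_self_sqrt (hU.eigenvalues_nonneg j)
    linear_combination (V x j * V y j) * h
  calc ∑ c : Fin r, V x (e.symm c) * Real.sqrt (hH.eigenvalues (e.symm c)) *
        (V y (e.symm c) * Real.sqrt (hH.eigenvalues (e.symm c)))
      = ∑ j : {i // hH.eigenvalues i ≠ 0}, V x j * Real.sqrt (hH.eigenvalues j) *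
        (V y j * Real.sqrt (hH.eigenvalues j)) :=
        Equiv.sum_comp e.symm (fun j : {i // hH.eigenvalues i ≠ 0} =>
          V x j * Real.sqrt (hH.eigenvalues j) * (V y j * Real.sqrt (hH.eigenvalues j)))
    _ = ∑ j : {i // hH.eigenvalues i ≠ 0}, V x j * hH.eigenvalues j * V y j := by
        exact Finset.sum_congr rfl fun j _ => key j
    _ = ∑ j : n, V x j * hH.eigenvalues j * V y j := by
        rw [← Finset.sum_filter_of_ne (p := fun j => hH.eigenvalues j ≠ 0)
          (fun j _ hne h0 => hne (by simp [h0]))]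
        exact (Finset.sum_subtype (Finset.univ.filter fun j => hH.eigenvalues j ≠ 0)
          (fun j => by simp) (fun j => V x j * hH.eigenvalues j * V y j)).symm
    _ = U x y := by
        conv_rhs => rw [hH.spectral_theorem, Unitary.conjStarAlgAut_apply]
        rw [Matrix.mul_apply]
        refine Finset.sum_congr rfl fun j _ => ?_
        simp [Matrix.mul_diagonal, Matrix.conjTranspose_apply, mul_comm, mul_assoc, hV]

/-- An `r × r` real PSD matrix `M` with `M - M²` PSD and trace `r` equals the identity. -/
lemma psd_trace_eq_one (r : ℕ) (M : Matrix (Fin r) (Fin r) ℝ) (hM : M.PosSemidef)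
    (h2 : (M - M * M).PosSemidef) (htr : M.trace = r) : M = 1 := by
  have hH := hM.isHermitian
  have hle : ∀ i, hH.eigenvalues i ≤ 1 := by
    intro i
    set μ := hH.eigenvalues i with hμ
    set v : Fin r → ℝ := ⇑(hH.eigenvectorBasis i) with hv
    have hmv : M *ᵥ v = μ • v := hH.mulVec_eigenvectorBasis i
    have hμeq : μ = v ⬝ᵥ (M *ᵥ v) := by
      have := hH.eigenvalues_eq i
      simpa [star_trivial] using this
    have hq := h2.dotProduct_mulVec_nonneg v
    rw [sub_mulVec, ← Matrix.mulVec_mulVec, hmv, Matrix.mulVec_smul, hmv] at hq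
    simp only [star_trivial, dotProduct_sub, dotProduct_smul, smul_eq_mul, smul_smul] at hq
    have hs : (0:ℝ) ≤ v ⬝ᵥ v := Finset.sum_nonneg fun j _ => mul_self_nonneg (v j)
    have hμs : μ = μ * (v ⬝ᵥ v) := by
      rw [hmv, dotProduct_smul, smul_eq_mul] at hμeq
      exact hμeq
    have hμ0 : 0 ≤ μ := hM.eigenvalues_nonneg i
    nlinarith [hq, hμs, hμ0, hs]
  have htr' : M.trace = ∑ i, hH.eigenvalues i := by
    conv_lhs => rw [hH.spectral_theorem, Unitary.conjStarAlgAut_apply]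
    rw [Matrix.trace_mul_cycle, Unitary.coe_star_mul_self, one_mul]
    simp [Matrix.trace_diagonal]
  have hsum : ∑ i, (1 - hH.eigenvalues i) = 0 := by
    have h1 : ∑ i, hH.eigenvalues i = (r : ℝ) := by rw [← htr', htr]
    rw [Finset.sum_sub_distrib, h1, Finset.sum_const, Finset.card_univ, Fintype.card_fin]
    simp
  have heig : ∀ i, hH.eigenvalues i = 1 := by
    intro i
    have := (Finset.sum_eq_zero_iff_of_nonneg
      (fun j _ => by linarith [hle j])).mp hsum i (Finset.mem_univ i)
    linarith
  have hdiag : Matrix.diagonal (RCLike.ofReal ∘ hH.eigenvalues) = (1 : Matrix (Fin r) (Fin r) ℝ) := by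
    rw [show (RCLike.ofReal ∘ hH.eigenvalues : Fin r → ℝ) = fun _ => 1 from funext fun i => by
      simp [heig i]]
    exact Matrix.diagonal_one
  conv_lhs => rw [hH.spectral_theorem, Unitary.conjStarAlgAut_apply]
  rw [hdiag, mul_one, Matrix.mem_unitaryGroup_iff.mp hH.eigenvectorUnitary.2]

/-- A D×D symmetric PSD matrix of rank r whose diagonal blocks satisfy
U_ii ⪯ I and tr(U_ii) = r factors as U = O Oᵀ with each block of O having
orthonormal columns. The index type `(i : Fin m) × Fin (d i)` encodes the block
partition D = d_1 + ... + d_m. -/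
theorem stmt0 (m r : ℕ) (hm : 0 < m) (hr : 0 < r) (d : Fin m → ℕ)
    (hd : ∀ i, 0 < d i) (hrd : ∀ i, r ≤ d i)
    (U : Matrix ((i : Fin m) × Fin (d i)) ((i : Fin m) × Fin (d i)) ℝ)
    (hU : U.PosSemidef) (hrank : U.rank = r)
    (hdiag1 : ∀ i : Fin m,
      ((1 : Matrix (Fin (d i)) (Fin (d i)) ℝ) -
        Matrix.of fun a b => U ⟨i, a⟩ ⟨i, b⟩).PosSemidef)
    (hdiag2 : ∀ i : Fin m,
      (Matrix.of fun a b : Fin (d i) => U ⟨i, a⟩ ⟨i, b⟩).trace = (r : ℝ)) :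
    ∃ O : Matrix ((i : Fin m) × Fin (d i)) (Fin r) ℝ,
      U = O * Oᵀ ∧
      ∀ i : Fin m,
        (Matrix.of fun (a : Fin (d i)) (c : Fin r) => O ⟨i, a⟩ c)ᵀ *
          (Matrix.of fun (a : Fin (d i)) (c : Fin r) => O ⟨i, a⟩ c) = 1 := by
  obtain ⟨B, hB⟩ := rankFact r U hU hrank
  refine ⟨B, hB, fun i => ?_⟩
  set Bi : Matrix (Fin (d i)) (Fin r) ℝ := Matrix.of fun a c => B ⟨i, a⟩ c with hBi
  have hblock : (Matrix.of fun a b => U ⟨i, a⟩ ⟨i, b⟩) = Bi * Biᵀ := by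
    ext a b
    simp [hB, Matrix.mul_apply, hBi]
  have hct : Biᴴ = Biᵀ := Matrix.conjTranspose_eq_transpose_of_trivial Bi
  have hPSD : (Biᵀ * Bi).PosSemidef := by
    rw [← hct]; exact Matrix.posSemidef_conjTranspose_mul_self Bi
  have hps := (hdiag1 i).conjTranspose_mul_mul_same Bi
  rw [hblock, hct] at hps
  have hrw : Biᵀ * ((1 : Matrix (Fin (d i)) (Fin (d i)) ℝ) - Bi * Biᵀ) * Bi
      = Biᵀ * Bi - (Biᵀ * Bi) * (Biᵀ * Bi) := by
    simp only [Matrix.mul_sub, Matrix.sub_mul, Matrix.mul_one, Matrix.mul_assoc]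
  rw [hrw] at hps
  have htr : (Biᵀ * Bi).trace = (r : ℝ) := by
    rw [Matrix.trace_mul_comm, ← hblock]
    exact hdiag2 i
  exact psd_trace_eq_one r (Biᵀ * Bi) hPSD hps htr
end

section
/- Let V_i, Ṽ_i ∈ ℝ^{d×r} have orthonormal columns and suppose M := VᵀṼ = Σ_j V_jᵀṼ_j ∈ ℝ^{r×r} is symmetric positive semidefinite. Then tr((V_i − Ṽ_i)ᵀ V_i M) ≥ (1/2)·λ_min(M)·‖Ṽ_i − V_i‖_F², where λ_min(M) is the smallest eigenvalue of M. -/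
open Matrix

/-- Frobenius norm of a real matrix. -/
noncomputable def frobNorm {m n : Type*} [Fintype m] [Fintype n] (A : Matrix m n ℝ) : ℝ :=
  Real.sqrt (∑ i, ∑ j, (A i j) ^ 2)

/-- tr(P M) ≥ λmin(M) tr(P) for P, M PSD. -/
lemma trace_mul_ge_inf_eigenvalues {r : ℕ} (hr : 0 < r)
    (P M : Matrix (Fin r) (Fin r) ℝ) (hP : P.PosSemidef) (hM : M.PosSemidef) :
    (⨅ j, hM.isHermitian.eigenvalues j) * P.trace ≤ (P * M).trace := by
  classical
  haveI : Nonempty (Fin r) := ⟨⟨0, hr⟩⟩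
  set U : Matrix (Fin r) (Fin r) ℝ := (hM.isHermitian.eigenvectorUnitary : Matrix (Fin r) (Fin r) ℝ)
  set ev := hM.isHermitian.eigenvalues
  set Q : Matrix (Fin r) (Fin r) ℝ := star U * P * U with hQdef
  have hQ : Q.PosSemidef := hP.conjTranspose_mul_mul_same U
  have hQdiag : ∀ j, 0 ≤ Q j j := fun j => by
    exact hQ.diag_nonneg
  have hUunit : U * star U = 1 :=
    Matrix.mem_unitaryGroup_iff.mp hM.isHermitian.eigenvectorUnitary.2
  have hUunit' : star U * U = 1 :=
    Matrix.mem_unitaryGroup_iff'.mp hM.isHermitian.eigenvectorUnitary.2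
  have hspec : M = U * Matrix.diagonal ev * star U := by
    simpa using hM.isHermitian.spectral_theorem
  have hc : ∀ j, (⨅ i, ev i) ≤ ev j := fun j =>
    ciInf_le (Finite.bddBelow_range _) j
  have htraceQ : Q.trace = P.trace := by
    rw [hQdef, Matrix.trace_mul_comm, ← mul_assoc, hUunit, one_mul]
  have hPM : (P * M).trace = ∑ j, ev j * Q j j := by
    rw [hspec]
    have : P * (U * Matrix.diagonal ev * star U) = U * (Q * Matrix.diagonal ev) * star U := by
      rw [hQdef]
      calc P * (U * Matrix.diagonal ev * star U)
          = (1 : Matrix (Fin r) (Fin r) ℝ) * P * U * Matrix.diagonal ev * star U := by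
            noncomm_ring
        _ = (U * star U) * P * U * Matrix.diagonal ev * star U := by rw [hUunit]
        _ = U * (star U * P * U * Matrix.diagonal ev) * star U := by noncomm_ring
    rw [this, Matrix.trace_mul_comm, ← mul_assoc, hUunit', one_mul, Matrix.trace]
    simp [Matrix.mul_diagonal, Matrix.diag, mul_comm]
  rw [hPM, ← htraceQ, Matrix.trace, Finset.mul_sum]
  exact Finset.sum_le_sum fun j _ => mul_le_mul_of_nonneg_right (hc j) (hQdiag j)

/-- For V_i, Ṽ_i with orthonormal columns and M symmetric PSD,
tr((V_i − Ṽ_i)ᵀ V_i M) ≥ (1/2) λ_min(M) ‖Ṽ_i − V_i‖_F². -/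
theorem stmt10 (d r : ℕ) (hr : 0 < r) (Vi Vti : Matrix (Fin d) (Fin r) ℝ)
    (hVi : Viᵀ * Vi = 1) (hVti : Vtiᵀ * Vti = 1)
    (M : Matrix (Fin r) (Fin r) ℝ) (hM : M.PosSemidef) :
    (1 / 2) * (⨅ j, hM.isHermitian.eigenvalues j) * frobNorm (Vti - Vi) ^ 2 ≤
      ((Vi - Vti)ᵀ * Vi * M).trace := by
  classical
  set A : Matrix (Fin d) (Fin r) ℝ := Vti - Vi with hA
  set P : Matrix (Fin r) (Fin r) ℝ := Aᵀ * A with hP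
  have hPpsd : P.PosSemidef := Matrix.posSemidef_conjTranspose_mul_self A
  -- Frobenius norm squared equals trace of AᵀA
  have hfrob : frobNorm A ^ 2 = P.trace := by
    have hnn : (0:ℝ) ≤ ∑ i, ∑ j, (A i j) ^ 2 :=
      Finset.sum_nonneg fun i _ => Finset.sum_nonneg fun j _ => sq_nonneg _
    rw [frobNorm, Real.sq_sqrt hnn, hP, Matrix.trace]
    rw [Finset.sum_comm]
    simp [Matrix.diag, Matrix.mul_apply, pow_two]
  -- symmetry trick: tr(ViᵀVti M) = tr(VtiᵀVi M)
  have hsym : ((Viᵀ * Vti) * M).trace = ((Vtiᵀ * Vi) * M).trace := by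
    conv_lhs => rw [← Matrix.trace_transpose]
    rw [Matrix.transpose_mul, Matrix.transpose_mul, Matrix.transpose_transpose]
    have hMs : Mᵀ = M := hM.isHermitian.eq
    rw [hMs, Matrix.trace_mul_comm]
  -- tr((Vi - Vti)ᵀ Vi M) = (1/2) tr(P M)
  have hkey : ((Vi - Vti)ᵀ * Vi * M).trace = (1/2) * (P * M).trace := by
    have hPexp : P = 2 • (1 : Matrix (Fin r) (Fin r) ℝ) - Vtiᵀ * Vi - Viᵀ * Vti := by
      rw [hP, hA, Matrix.transpose_sub, Matrix.sub_mul, Matrix.mul_sub, Matrix.mul_sub,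
        hVi, hVti, two_smul]
      abel
    have hLexp : (Vi - Vti)ᵀ * Vi = 1 - Vtiᵀ * Vi := by
      rw [Matrix.transpose_sub, Matrix.sub_mul, hVi]
    rw [hLexp, hPexp]
    rw [Matrix.sub_mul, Matrix.sub_mul, Matrix.sub_mul, Matrix.one_mul, Matrix.smul_mul,
      Matrix.one_mul, Matrix.trace_sub, Matrix.trace_sub, Matrix.trace_sub,
      Matrix.trace_smul, hsym]
    ring
  rw [hfrob, hkey, mul_assoc]
  have := trace_mul_ge_inf_eigenvalues hr P M hPpsd hM
  linarith
end

section
/- Let S ∈ ℝ^{D×D} be block-symmetric with S_{ii} = 0 and S_{ij} = V_i V_jᵀ for i ≠ j, where each V_i ∈ ℝ^{d_i×r} has orthonormal columns, and let V ∈ ℝ^{D×r} stack the V_i. Define T = −m Π_{L_2 ∩ L_1^⊥}, with L_1 = col(V) and L_2 = {x : x_i ∈ col(V_i)}. Then T satisfies: (a) T_{ij} = S_{ij} for i ≠ j; (b) T V = 0 (equivalently Π_{V^⊥} T Π_{V^⊥} = T); (c) T_{ii} = −(m−1) V_i V_iᵀ. -/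
open Matrix

section Aux

variable {n : Type*} [Fintype n] [DecidableEq n]

lemma aux_mulVec_ext {A B : Matrix n n ℝ} (h : ∀ v, A *ᵥ v = B *ᵥ v) : A = B := by
  ext i j
  have := congrFun (h (Pi.single j 1)) i
  simpa [Matrix.mulVec_single] using this

lemma aux_proj_absorb {X Y : Matrix n n ℝ} (hX : X * X = X)
    (h : Set.range Y.mulVec ⊆ Set.range X.mulVec) : X * Y = Y := by
  apply aux_mulVec_ext
  intro v
  obtain ⟨w, hw⟩ := h ⟨v, rfl⟩
  calc (X * Y) *ᵥ v = X *ᵥ (Y *ᵥ v) := (Matrix.mulVec_mulVec _ _ _).symm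
    _ = X *ᵥ (X *ᵥ w) := by rw [hw]
    _ = (X * X) *ᵥ w := Matrix.mulVec_mulVec _ _ _
    _ = X *ᵥ w := by rw [hX]
    _ = Y *ᵥ v := hw

lemma aux_proj_unique {P R : Matrix n n ℝ} (hPs : Pᵀ = P) (hRs : Rᵀ = R)
    (hPi : P * P = P) (hRi : R * R = R)
    (h : Set.range P.mulVec = Set.range R.mulVec) : P = R := by
  have h1 : P * R = R := aux_proj_absorb hPi h.ge
  have h2 : R * P = P := aux_proj_absorb hRi h.le
  calc P = Pᵀ := hPs.symm
    _ = (R * P)ᵀ := by rw [h2]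
    _ = Pᵀ * Rᵀ := Matrix.transpose_mul _ _
    _ = P * R := by rw [hPs, hRs]
    _ = R := h1

lemma aux_swap1 {ι κ : Type*} [Fintype ι] [Fintype κ]
    (f : κ → ℝ) (g : ι → κ → ℝ) (h : ι → ℝ) :
    ∑ a : ι, (∑ c, f c * g a c) * h a = ∑ c, f c * ∑ a, g a c * h a := by
  simp only [Finset.sum_mul, Finset.mul_sum]
  rw [Finset.sum_comm]
  exact Finset.sum_congr rfl fun _ _ => Finset.sum_congr rfl fun _ _ => by ring

lemma aux_swap2 {ι κ : Type*} [Fintype ι] [Fintype κ]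
    (g : ι → ℝ) (t : ι → κ → ℝ) (u : κ → ℝ) :
    ∑ a : ι, g a * ∑ c, t a c * u c = ∑ c, (∑ a, g a * t a c) * u c := by
  simp only [Finset.sum_mul, Finset.mul_sum]
  rw [Finset.sum_comm]
  exact Finset.sum_congr rfl fun _ _ => Finset.sum_congr rfl fun _ _ => by ring

end Aux

/-- Let S have zero diagonal blocks and off-diagonal blocks V_iV_jᵀ,
where the blocks V_i of V have orthonormal columns. Let P be the orthogonal
projector (symmetric idempotent with the indicated range) onto
L₂ ∩ L₁^⊥ = {x : x_i ∈ col(V_i) ∀i, and Vᵀx = 0}. Then T = −m·P satisfies: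
(a) T agrees with S off the block diagonal; (b) T V = 0;
(c) the diagonal blocks of T are −(m−1) V_iV_iᵀ. -/
theorem stmt15 (m r : ℕ) (hm : 0 < m) (d : Fin m → ℕ)
    (V : Matrix ((i : Fin m) × Fin (d i)) (Fin r) ℝ)
    (hV : ∀ i : Fin m,
      (Matrix.of fun (a : Fin (d i)) (c : Fin r) => V ⟨i, a⟩ c)ᵀ *
        (Matrix.of fun (a : Fin (d i)) (c : Fin r) => V ⟨i, a⟩ c) = 1)
    (S : Matrix ((i : Fin m) × Fin (d i)) ((i : Fin m) × Fin (d i)) ℝ)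
    (hS : ∀ p q : (i : Fin m) × Fin (d i),
      S p q = if p.1 = q.1 then 0 else ∑ c, V p c * V q c)
    (P : Matrix ((i : Fin m) × Fin (d i)) ((i : Fin m) × Fin (d i)) ℝ)
    (hPsymm : Pᵀ = P) (hPidem : P * P = P)
    (hPrange : Set.range P.mulVec =
      {x | (∀ i : Fin m, ∃ y : Fin r → ℝ, ∀ a : Fin (d i),
        x ⟨i, a⟩ = (Matrix.of fun (a : Fin (d i)) (c : Fin r) => V ⟨i, a⟩ c).mulVec y a) ∧
        Vᵀ *ᵥ x = 0}) :
    (∀ p q : (i : Fin m) × Fin (d i), p.1 ≠ q.1 → ((-(m : ℝ)) • P) p q = S p q) ∧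
    ((-(m : ℝ)) • P) * V = 0 ∧
    (∀ (i : Fin m) (a b : Fin (d i)),
      ((-(m : ℝ)) • P) ⟨i, a⟩ ⟨i, b⟩ = -((m : ℝ) - 1) * ∑ c, V ⟨i, a⟩ c * V ⟨i, b⟩ c) := by
  have hm' : (m : ℝ) ≠ 0 := Nat.cast_ne_zero.mpr hm.ne'
  -- orthonormality of blocks, entrywise
  have hVo : ∀ (i : Fin m) (c c' : Fin r),
      (∑ a : Fin (d i), V ⟨i, a⟩ c * V ⟨i, a⟩ c') = if c = c' then 1 else 0 := by
    intro i c c'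
    have h := congrFun (congrFun (hV i) c) c'
    simpa [Matrix.mul_apply, Matrix.one_apply] using h
  have hsig : ∀ (f : ((i : Fin m) × Fin (d i)) → ℝ),
      ∑ p : (i : Fin m) × Fin (d i), f p = ∑ i : Fin m, ∑ a : Fin (d i), f ⟨i, a⟩ := by
    intro f
    rw [← Finset.univ_sigma_univ, Finset.sum_sigma]
  have hsum : ∀ c c' : Fin r,
      ∑ p : (i : Fin m) × Fin (d i), V p c * V p c' = (m : ℝ) * (if c = c' then 1 else 0) := by
    intro c c'
    rw [hsig]
    simp [hVo, mul_comm]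
  -- the block diagonal projector Q and K = V Vᵀ
  obtain ⟨Q, hQdef⟩ : ∃ Q : Matrix ((i : Fin m) × Fin (d i)) ((i : Fin m) × Fin (d i)) ℝ,
    Q = Matrix.of fun p q => if p.1 = q.1 then ∑ c, V p c * V q c else 0 := ⟨_, rfl⟩
  obtain ⟨K, hKdef⟩ : ∃ K : Matrix ((i : Fin m) × Fin (d i)) ((i : Fin m) × Fin (d i)) ℝ,
    K = V * Vᵀ := ⟨_, rfl⟩
  have hKapp : ∀ p q, K p q = ∑ c, V p c * V q c := by
    intro p q; simp [hKdef, Matrix.mul_apply]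
  have hQs : Qᵀ = Q := by
    ext p q
    simp only [Matrix.transpose_apply, hQdef, Matrix.of_apply]
    rcases eq_or_ne p.1 q.1 with h | h
    · simp [h, mul_comm]
    · simp [h, Ne.symm h]
  have hKs : Kᵀ = K := by
    ext p q; simp [hKapp, Matrix.transpose_apply, mul_comm]
  have hQV : Q * V = V := by
    ext p c
    rw [Matrix.mul_apply, hsig (fun q => Q p q * V q c)]
    simp only [hQdef, Matrix.of_apply]
    rw [Finset.sum_eq_single p.1]
    · simp only [eq_self_iff_true, if_true]
      rw [aux_swap1 (fun c' => V p c') (fun a c' => V ⟨p.1, a⟩ c') (fun a => V ⟨p.1, a⟩ c)]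
      simp [hVo]
    · intro i _ hi
      simp [Ne.symm hi]
    · simp
  have hKV : K * V = (m : ℝ) • V := by
    ext p c
    rw [Matrix.mul_apply]
    simp only [hKapp]
    rw [aux_swap1 (fun c' => V p c') (fun q c' => V q c') (fun q => V q c)]
    simp [hsum, mul_comm, mul_left_comm]
  have hQQ : Q * Q = Q := by
    ext p q
    rw [Matrix.mul_apply, hsig (fun s => Q p s * Q s q)]
    simp only [hQdef, Matrix.of_apply]
    rw [Finset.sum_eq_single p.1]
    · simp only [eq_self_iff_true, if_true]
      rcases eq_or_ne p.1 q.1 with h | h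
      · simp only [if_pos h, if_pos rfl]
        rw [aux_swap1 (fun c => V p c) (fun a c => V ⟨p.1, a⟩ c)
          (fun a => ∑ c', V ⟨p.1, a⟩ c' * V q c')]
        congr 1; ext c
        congr 1
        rw [aux_swap2 (fun a => V ⟨p.1, a⟩ c) (fun a c' => V ⟨p.1, a⟩ c') (fun c' => V q c')]
        simp [hVo]
      · simp [h]
    · intro i _ hi
      simp [Ne.symm hi]
    · simp
  have hQK : Q * K = K := by rw [hKdef, ← Matrix.mul_assoc, hQV]
  have hKQ : K * Q = K := by
    have := congrArg Matrix.transpose hQK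
    rwa [Matrix.transpose_mul, hQs, hKs] at this
  have hKK : K * K = (m : ℝ) • K := by
    rw [show K * K = (K * V) * Vᵀ from by rw [Matrix.mul_assoc, ← hKdef], hKV,
      Matrix.smul_mul, ← hKdef]
  -- the candidate projector
  obtain ⟨R, hRdef⟩ : ∃ R : Matrix ((i : Fin m) × Fin (d i)) ((i : Fin m) × Fin (d i)) ℝ,
    R = Q - (m : ℝ)⁻¹ • K := ⟨_, rfl⟩
  have hRs : Rᵀ = R := by
    rw [hRdef, Matrix.transpose_sub, Matrix.transpose_smul, hQs, hKs]
  have hRV : R * V = 0 := by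
    rw [hRdef, Matrix.sub_mul, Matrix.smul_mul, hQV, hKV, smul_smul,
      inv_mul_cancel₀ hm', one_smul, sub_self]
  have hRi : R * R = R := by
    have expand : R * R = Q * Q - (m : ℝ)⁻¹ • (K * Q) -
        ((m : ℝ)⁻¹ • (Q * K) - ((m : ℝ)⁻¹ * (m : ℝ)⁻¹) • (K * K)) := by
      rw [hRdef]
      simp only [Matrix.sub_mul, Matrix.mul_sub, Matrix.smul_mul, Matrix.mul_smul,
        smul_sub, smul_smul]
    rw [expand, hQQ, hQK, hKQ, hKK, hRdef]
    ext p q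
    simp only [Matrix.sub_apply, Matrix.smul_apply, smul_eq_mul]
    field_simp
    ring
  have hVR : Vᵀ * R = 0 := by
    have := congrArg Matrix.transpose hRV
    rwa [Matrix.transpose_mul, hRs, Matrix.transpose_zero] at this
  -- range of R is the prescribed set
  have hrange : Set.range R.mulVec =
      {x | (∀ i : Fin m, ∃ y : Fin r → ℝ, ∀ a : Fin (d i),
        x ⟨i, a⟩ = (Matrix.of fun (a : Fin (d i)) (c : Fin r) => V ⟨i, a⟩ c).mulVec y a) ∧
        Vᵀ *ᵥ x = 0} := by
    ext x
    constructor
    · rintro ⟨v, rfl⟩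
      refine ⟨?_, ?_⟩
      · intro i
        refine ⟨fun c => (∑ a' : Fin (d i), V ⟨i, a'⟩ c * v ⟨i, a'⟩)
          - (m : ℝ)⁻¹ * ∑ p, V p c * v p, ?_⟩
        intro a
        show (R *ᵥ v) ⟨i, a⟩ = _
        rw [Matrix.mulVec, dotProduct, hsig (fun q => R ⟨i, a⟩ q * v q)]
        simp only [hRdef, Matrix.sub_apply, Matrix.smul_apply, hQdef, Matrix.of_apply,
          hKapp, smul_eq_mul, Matrix.mulVec, dotProduct]
        have step1 : ∀ j : Fin m,
            ∑ b : Fin (d j), ((if i = j then ∑ c, V ⟨i, a⟩ c * V ⟨j, b⟩ c else 0)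
              - (m : ℝ)⁻¹ * ∑ c, V ⟨i, a⟩ c * V ⟨j, b⟩ c) * v ⟨j, b⟩
            = (∑ b : Fin (d j), (if i = j then ∑ c, V ⟨i, a⟩ c * V ⟨j, b⟩ c else 0) * v ⟨j, b⟩)
              - (m : ℝ)⁻¹ * ∑ b : Fin (d j), (∑ c, V ⟨i, a⟩ c * V ⟨j, b⟩ c) * v ⟨j, b⟩ := by
          intro j
          rw [Finset.mul_sum, ← Finset.sum_sub_distrib]
          congr 1; ext b; ring
        rw [Finset.sum_congr rfl (fun j _ => step1 j), Finset.sum_sub_distrib,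
          ← Finset.mul_sum]
        have hfst : ∑ j : Fin m, ∑ b : Fin (d j),
            (if i = j then ∑ c, V ⟨i, a⟩ c * V ⟨j, b⟩ c else 0) * v ⟨j, b⟩
            = ∑ c, V ⟨i, a⟩ c * ∑ a' : Fin (d i), V ⟨i, a'⟩ c * v ⟨i, a'⟩ := by
          rw [Finset.sum_eq_single i]
          · simp only [eq_self_iff_true, if_true]
            exact aux_swap1 (fun c => V ⟨i, a⟩ c) (fun b c => V ⟨i, b⟩ c)
              (fun b => v ⟨i, b⟩)
          · intro j _ hj; simp [Ne.symm hj]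
          · simp
        have hsnd : ∑ j : Fin m, ∑ b : Fin (d j), (∑ c, V ⟨i, a⟩ c * V ⟨j, b⟩ c) * v ⟨j, b⟩
            = ∑ c, V ⟨i, a⟩ c * ∑ p, V p c * v p := by
          rw [← hsig (fun q => (∑ c, V ⟨i, a⟩ c * V q c) * v q)]
          exact aux_swap1 (fun c => V ⟨i, a⟩ c) (fun q c => V q c) (fun q => v q)
        rw [hfst, hsnd, Finset.mul_sum, ← Finset.sum_sub_distrib]
        congr 1; ext c
        ring
      · show Vᵀ *ᵥ (R *ᵥ v) = 0
        rw [Matrix.mulVec_mulVec, hVR, Matrix.zero_mulVec]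
    · rintro ⟨h1, h2⟩
      refine ⟨x, ?_⟩
      have hKx : K *ᵥ x = 0 := by
        rw [hKdef, ← Matrix.mulVec_mulVec, h2, Matrix.mulVec_zero]
      have hQx : Q *ᵥ x = x := by
        funext p
        obtain ⟨i, a⟩ := p
        obtain ⟨y, hy⟩ := h1 i
        rw [Matrix.mulVec, dotProduct, hsig (fun q => Q ⟨i, a⟩ q * x q)]
        simp only [hQdef, Matrix.of_apply]
        rw [Finset.sum_eq_single i]
        · simp only [eq_self_iff_true, if_true]
          have hxa : ∀ a' : Fin (d i), x ⟨i, a'⟩ = ∑ c, V ⟨i, a'⟩ c * y c := by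
            intro a'
            rw [hy a']
            simp [Matrix.mulVec, dotProduct]
          rw [aux_swap1 (fun c => V ⟨i, a⟩ c) (fun b c => V ⟨i, b⟩ c) (fun b => x ⟨i, b⟩)]
          rw [hxa a]
          congr 1; ext c
          congr 1
          calc ∑ b : Fin (d i), V ⟨i, b⟩ c * x ⟨i, b⟩
              = ∑ b : Fin (d i), V ⟨i, b⟩ c * ∑ c', V ⟨i, b⟩ c' * y c' := by
                congr 1; ext b; rw [hxa b]
            _ = ∑ c', (∑ b : Fin (d i), V ⟨i, b⟩ c * V ⟨i, b⟩ c') * y c' :=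
                aux_swap2 _ _ _
            _ = y c := by simp [hVo]
        · intro j _ hj; simp [Ne.symm hj]
        · simp
      rw [hRdef, Matrix.sub_mulVec, hQx, Matrix.smul_mulVec, hKx, smul_zero, sub_zero]
  -- uniqueness of the projector
  have hPR : P = R := aux_proj_unique hPsymm hRs hPidem hRi (hPrange.trans hrange.symm)
  subst hPR
  refine ⟨?_, ?_, ?_⟩
  · intro p q hpq
    rw [hS p q, if_neg hpq]
    simp only [Matrix.smul_apply, hRdef, Matrix.sub_apply, Matrix.smul_apply, hQdef,
      Matrix.of_apply, hKapp, if_neg hpq, smul_eq_mul]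
    field_simp
    ring
  · rw [Matrix.smul_mul, hRV, smul_zero]
  · intro i a b
    simp only [Matrix.smul_apply, hRdef, Matrix.sub_apply, Matrix.smul_apply, hQdef,
      Matrix.of_apply, hKapp, if_pos rfl, smul_eq_mul]
    field_simp
    rw [if_pos trivial]
    ring
end
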